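/- arXiv:2305.12030 — 2 statements merged into one kernel-verified Lean document; each statement's English description precedes it below -/
import Mathlib

section
/- Let E be a real Hilbert space, let f : E → ℝ be differentiable with M-Lipschitz gradient (M ≥ 0), and fix u* ∈ E. Let (Ω, μ) be a probability space and U : Ω → E a measurable map such that f∘U, ‖∇f∘U‖², and ‖U − u*‖² are integrable and ∇f∘U is Bochner integrable. Suppose ‖∫(∇f∘U) dμ‖ ≤ m, ∫‖∇f(U) − ∫(∇f∘U)dμ‖² dμ ≤ v, and ∫‖U − u*‖² dμ ≤ δ². Then f(u*) − ∫ f(U) dμ ≤ (1/2)·m² + (1/2)·v + ((M+1)/2)·δ². -/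
open MeasureTheory intervalIntegral
open scoped InnerProductSpace

lemma fderiv_eq_inner_gradient {E : Type*} [NormedAddCommGroup E] [InnerProductSpace ℝ E]
    [CompleteSpace E] (f : E → ℝ) (z w : E) :
    fderiv ℝ f z w = ⟪gradient f z, w⟫_ℝ := by
  rw [gradient, InnerProductSpace.toDual_symm_apply]

lemma descent_lemma {E : Type*} [NormedAddCommGroup E] [InnerProductSpace ℝ E] [CompleteSpace E]
    (f : E → ℝ) (M : ℝ) (hM : 0 ≤ M) (hf : Differentiable ℝ f)
    (hlip : ∀ x y, ‖gradient f x - gradient f y‖ ≤ M * ‖x - y‖) (x y : E) :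
    f y ≤ f x + ⟪gradient f x, y - x⟫_ℝ + M / 2 * ‖y - x‖ ^ 2 := by
  set w := y - x with hw
  have hgradcont : Continuous (gradient f) := by
    have : LipschitzWith (Real.toNNReal M) (gradient f) := by
      apply LipschitzWith.of_dist_le_mul
      intro a b
      rw [dist_eq_norm, dist_eq_norm]
      exact le_trans (hlip a b) (by rw [Real.coe_toNNReal M hM])
    exact this.continuous
  have key : ∀ t : ℝ, HasDerivAt (fun t => f (x + t • w)) ⟪gradient f (x + t • w), w⟫_ℝ t := by
    intro t
    have hL : HasDerivAt (fun t : ℝ => x + t • w) w t := by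
      simpa using ((hasDerivAt_id t).smul_const w).const_add x
    have := (hf (x + t • w)).hasFDerivAt.comp_hasDerivAt t hL
    rw [fderiv_eq_inner_gradient f] at this
    exact this
  have hcont : Continuous fun t : ℝ => ⟪gradient f (x + t • w), w⟫_ℝ := by
    exact (hgradcont.comp (by continuity)).inner continuous_const
  have hint : IntervalIntegrable (fun t : ℝ => ⟪gradient f (x + t • w), w⟫_ℝ)
      volume 0 1 := hcont.intervalIntegrable 0 1
  have heq : f y - f x = ∫ t in (0:ℝ)..1, ⟪gradient f (x + t • w), w⟫_ℝ := by
    have := integral_eq_sub_of_hasDerivAt (fun t _ => key t) hint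
    rw [this]; norm_num [hw]
  have hbound : ∫ t in (0:ℝ)..1, ⟪gradient f (x + t • w), w⟫_ℝ ≤
      ∫ t in (0:ℝ)..1, (⟪gradient f x, w⟫_ℝ + M * t * ‖w‖ ^ 2) := by
    apply integral_mono_on (by norm_num) hint
    · apply Continuous.intervalIntegrable; continuity
    · intro t ht
      rw [Set.mem_Icc] at ht
      have h1 : ⟪gradient f (x + t • w), w⟫_ℝ - ⟪gradient f x, w⟫_ℝ
          = ⟪gradient f (x + t • w) - gradient f x, w⟫_ℝ := by
        rw [inner_sub_left]
      have h2 : ⟪gradient f (x + t • w) - gradient f x, w⟫_ℝ ≤ M * t * ‖w‖ ^ 2 := by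
        calc ⟪gradient f (x + t • w) - gradient f x, w⟫_ℝ
            ≤ ‖gradient f (x + t • w) - gradient f x‖ * ‖w‖ := real_inner_le_norm _ _
          _ ≤ (M * ‖(x + t • w) - x‖) * ‖w‖ := by
              apply mul_le_mul_of_nonneg_right (hlip _ _) (norm_nonneg _)
          _ = M * t * ‖w‖ ^ 2 := by
              rw [add_sub_cancel_left, norm_smul, Real.norm_eq_abs, abs_of_nonneg ht.1]; ring
      linarith
  have hval : ∫ t in (0:ℝ)..1, (⟪gradient f x, w⟫_ℝ + M * t * ‖w‖ ^ 2)
      = ⟪gradient f x, w⟫_ℝ + M / 2 * ‖w‖ ^ 2 := by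
    rw [intervalIntegral.integral_add (by apply Continuous.intervalIntegrable; continuity)
      (by apply Continuous.intervalIntegrable; continuity)]
    have h1 : ∫ _ in (0:ℝ)..1, (⟪gradient f x, w⟫_ℝ) = ⟪gradient f x, w⟫_ℝ := by simp
    have h2 : ∫ t in (0:ℝ)..1, M * t * ‖w‖ ^ 2 = M / 2 * ‖w‖ ^ 2 := by
      have he : (fun t : ℝ => M * t * ‖w‖ ^ 2) = fun t : ℝ => (M * ‖w‖ ^ 2) * t := by
        ext t; ring
      rw [he, intervalIntegral.integral_const_mul, integral_id]; ring
    rw [h1, h2]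
  linarith [heq ▸ (hbound.trans_eq hval)]


open MeasureTheory

/-- Let `f : E → ℝ` be differentiable with `M`-Lipschitz gradient on a real
Hilbert space, `u* ∈ E`, `(Ω, μ)` a probability space and `U : Ω → E` with `f ∘ U`,
`‖∇f ∘ U‖²`, `‖U − u*‖²` integrable and `∇f ∘ U` Bochner integrable. If
`‖∫ ∇f(U) dμ‖ ≤ m`, `∫ ‖∇f(U) − ∫ ∇f(U) dμ‖² dμ ≤ v`, and `∫ ‖U − u*‖² dμ ≤ δ²`, then
`f u* − ∫ f(U) dμ ≤ m²/2 + v/2 + ((M+1)/2) δ²`. -/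
theorem expected_gap_bound_max_player
    {E : Type*} [NormedAddCommGroup E] [InnerProductSpace ℝ E] [CompleteSpace E]
    {Ω : Type*} [MeasurableSpace Ω] (μ : Measure Ω) [IsProbabilityMeasure μ]
    (f : E → ℝ) (M : ℝ) (hM : 0 ≤ M)
    (hf : Differentiable ℝ f)
    (hlip : ∀ x y, ‖gradient f x - gradient f y‖ ≤ M * ‖x - y‖)
    (ustar : E) (U : Ω → E)
    (hint₁ : Integrable (fun ω => f (U ω)) μ)
    (hint₂ : Integrable (fun ω => ‖gradient f (U ω)‖ ^ 2) μ)
    (hint₃ : Integrable (fun ω => ‖U ω - ustar‖ ^ 2) μ)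
    (hint₄ : Integrable (fun ω => gradient f (U ω)) μ)
    (m v δ : ℝ)
    (hm : ‖∫ ω, gradient f (U ω) ∂μ‖ ≤ m)
    (hv : ∫ ω, ‖gradient f (U ω) - ∫ ω', gradient f (U ω') ∂μ‖ ^ 2 ∂μ ≤ v)
    (hδ : ∫ ω, ‖U ω - ustar‖ ^ 2 ∂μ ≤ δ ^ 2) :
    f ustar - ∫ ω, f (U ω) ∂μ ≤
      (1 / 2) * m ^ 2 + (1 / 2) * v + ((M + 1) / 2) * δ ^ 2 := by
  set G : Ω → E := fun ω => gradient f (U ω) with hG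
  set c : E := ∫ ω, G ω ∂μ with hc
  -- integral of inner product with the mean
  have hinner_int : Integrable (fun ω => ⟪G ω, c⟫_ℝ) μ := by
    have := (innerSL ℝ c).integrable_comp hint₄
    refine this.congr (Filter.Eventually.of_forall fun ω => ?_)
    simp [real_inner_comm]
  have hGc : ∫ ω, ⟪G ω, c⟫_ℝ ∂μ = ‖c‖ ^ 2 := by
    have h1 : ∫ ω, ⟪c, G ω⟫_ℝ ∂μ = ⟪c, ∫ ω, G ω ∂μ⟫_ℝ := integral_inner hint₄ c
    have h2 : ∫ ω, ⟪G ω, c⟫_ℝ ∂μ = ∫ ω, ⟪c, G ω⟫_ℝ ∂μ := by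
      congr 1; ext ω; exact real_inner_comm _ _
    rw [h2, h1, ← hc, real_inner_self_eq_norm_sq]
  -- variance identity
  have hvar : ∫ ω, ‖G ω‖ ^ 2 ∂μ = (∫ ω, ‖G ω - c‖ ^ 2 ∂μ) + ‖c‖ ^ 2 := by
    have hexp : (fun ω => ‖G ω - c‖ ^ 2)
        = fun ω => ‖G ω‖ ^ 2 - 2 * ⟪G ω, c⟫_ℝ + ‖c‖ ^ 2 := by
      ext ω
      rw [norm_sub_sq_real]
    have h3 : ∫ ω, ‖G ω - c‖ ^ 2 ∂μ
        = (∫ ω, ‖G ω‖ ^ 2 ∂μ) - 2 * (∫ ω, ⟪G ω, c⟫_ℝ ∂μ) + ‖c‖ ^ 2 := by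
      have ha : Integrable (fun ω => ‖G ω‖ ^ 2 - 2 * ⟪G ω, c⟫_ℝ) μ :=
        hint₂.sub (hinner_int.const_mul 2)
      rw [hexp, integral_add ha (integrable_const _),
        integral_sub hint₂ (hinner_int.const_mul 2), MeasureTheory.integral_const_mul,
        MeasureTheory.integral_const]
      simp
      rfl
    rw [h3, hGc]; ring
  have hm0 : 0 ≤ m := le_trans (norm_nonneg _) hm
  have hc2 : ‖c‖ ^ 2 ≤ m ^ 2 := by nlinarith [norm_nonneg c]
  have hnorm2 : ∫ ω, ‖G ω‖ ^ 2 ∂μ ≤ v + m ^ 2 := by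
    rw [hvar]
    have : ∫ ω, ‖G ω - c‖ ^ 2 ∂μ ≤ v := hv
    linarith
  -- pointwise bound
  have hpt : ∀ ω, f ustar - f (U ω) ≤
      (1 / 2) * ‖G ω‖ ^ 2 + ((M + 1) / 2) * ‖U ω - ustar‖ ^ 2 := by
    intro ω
    have hd := descent_lemma f M hM hf hlip (U ω) ustar
    have hn : ‖ustar - U ω‖ = ‖U ω - ustar‖ := norm_sub_rev _ _
    have hi : ⟪gradient f (U ω), ustar - U ω⟫_ℝ ≤ ‖G ω‖ * ‖U ω - ustar‖ := by
      calc ⟪gradient f (U ω), ustar - U ω⟫_ℝ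
          ≤ ‖gradient f (U ω)‖ * ‖ustar - U ω‖ := real_inner_le_norm _ _
        _ = ‖G ω‖ * ‖U ω - ustar‖ := by rw [hn]
    rw [hn] at hd
    nlinarith [sq_nonneg (‖G ω‖ - ‖U ω - ustar‖)]
  -- integrate
  have hrhs_int : Integrable
      (fun ω => (1 / 2) * ‖G ω‖ ^ 2 + ((M + 1) / 2) * ‖U ω - ustar‖ ^ 2) μ :=
    (hint₂.const_mul _).add (hint₃.const_mul _)
  have hlhs_int : Integrable (fun ω => f ustar - f (U ω)) μ :=
    (integrable_const _).sub hint₁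
  have hmono := integral_mono hlhs_int hrhs_int hpt
  rw [integral_sub (integrable_const _) hint₁, MeasureTheory.integral_const,
    integral_add (hint₂.const_mul _) (hint₃.const_mul _),
    MeasureTheory.integral_const_mul, MeasureTheory.integral_const_mul] at hmono
  simp only [measure_univ, probReal_univ, ENNReal.toReal_one, smul_eq_mul, one_mul] at hmono
  have hstep : ((M + 1) / 2) * ∫ ω, ‖U ω - ustar‖ ^ 2 ∂μ ≤ ((M + 1) / 2) * δ ^ 2 :=
    mul_le_mul_of_nonneg_left hδ (by linarith)
  nlinarith [hmono, hnorm2, hstep]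
end

section
/- Let E be a real Hilbert space and let f : E → ℝ be differentiable with M-Lipschitz gradient, M ≥ 0. Let ζ ≥ 1 be a natural number and α > 0 satisfy 2·α·√ζ > M·α². Define iterates u : ℕ → E by gradient ascent with constant step size α/√ζ: u(i+1) = u(i) + (α/√ζ)·∇f(u(i)). Then min_{i<ζ} ‖∇f(u(i))‖² ≤ 2·(f(u(ζ)) − f(u(0))) / (2·α·√ζ − M·α²). -/
open InnerProductSpace

/-- Descent lemma: if `f` has `M`-Lipschitz gradient, then
`f (x + v) ≥ f x + ⟪∇f x, v⟫ - M/2 ‖v‖²`. -/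
lemma descent_lemma_aux
    {E : Type*} [NormedAddCommGroup E] [InnerProductSpace ℝ E] [CompleteSpace E]
    (f : E → ℝ) (M : ℝ)
    (hf : Differentiable ℝ f)
    (hlip : ∀ x y, ‖gradient f x - gradient f y‖ ≤ M * ‖x - y‖)
    (x v : E) :
    f x + ⟪gradient f x, v⟫_ℝ - M / 2 * ‖v‖ ^ 2 ≤ f (x + v) := by
  have hg : ∀ t : ℝ, HasDerivAt (fun t : ℝ => f (x + t • v))
      ⟪gradient f (x + t • v), v⟫_ℝ t := by
    intro t
    have hl : HasDerivAt (fun t : ℝ => x + t • v) v t := by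
      simpa using ((hasDerivAt_id t).smul_const v).const_add x
    have := ((hf (x + t • v)).hasGradientAt.hasFDerivAt).comp_hasDerivAt t hl
    simpa [InnerProductSpace.toDual_apply_apply, Function.comp_def] using this
  set h : ℝ → ℝ := fun t =>
    f (x + t • v) - t * ⟪gradient f x, v⟫_ℝ + M / 2 * ‖v‖ ^ 2 * t ^ 2 with hh_def
  have hh : ∀ t : ℝ, HasDerivAt h
      (⟪gradient f (x + t • v), v⟫_ℝ - ⟪gradient f x, v⟫_ℝ
        + M / 2 * ‖v‖ ^ 2 * (2 * t)) t := by
    intro t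
    have h1 : HasDerivAt (fun t : ℝ => t * ⟪gradient f x, v⟫_ℝ)
        ⟪gradient f x, v⟫_ℝ t := by
      simpa using (hasDerivAt_id t).mul_const ⟪gradient f x, v⟫_ℝ
    have h2 : HasDerivAt (fun t : ℝ => M / 2 * ‖v‖ ^ 2 * t ^ 2)
        (M / 2 * ‖v‖ ^ 2 * (2 * t)) t := by
      have := (hasDerivAt_pow 2 t).const_mul (M / 2 * ‖v‖ ^ 2)
      exact this.congr_deriv (by push_cast; ring)
    exact ((hg t).sub h1).add h2
  have hmono : MonotoneOn h (Set.Icc (0 : ℝ) 1) := by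
    apply monotoneOn_of_deriv_nonneg (convex_Icc 0 1)
    · exact fun t _ => ((hh t).continuousAt).continuousWithinAt
    · exact fun t _ => ((hh t).differentiableAt).differentiableWithinAt
    · intro t ht
      rw [interior_Icc] at ht
      rw [(hh t).deriv]
      have hcs : |⟪gradient f (x + t • v) - gradient f x, v⟫_ℝ|
          ≤ M * t * ‖v‖ ^ 2 := by
        calc |⟪gradient f (x + t • v) - gradient f x, v⟫_ℝ|
            ≤ ‖gradient f (x + t • v) - gradient f x‖ * ‖v‖ :=
              abs_real_inner_le_norm _ _
          _ ≤ M * ‖(x + t • v) - x‖ * ‖v‖ := by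
              gcongr; exact hlip _ _
          _ = M * t * ‖v‖ ^ 2 := by
              rw [add_sub_cancel_left, norm_smul, Real.norm_eq_abs,
                abs_of_pos ht.1]; ring
      have := neg_abs_le ⟪gradient f (x + t • v) - gradient f x, v⟫_ℝ
      rw [inner_sub_left] at this hcs
      nlinarith [abs_nonneg ⟪gradient f (x + t • v), v⟫_ℝ]
  have h01 := hmono (Set.left_mem_Icc.mpr zero_le_one)
    (Set.right_mem_Icc.mpr zero_le_one) zero_le_one
  simp only [hh_def, zero_smul, add_zero, one_smul, zero_mul, sub_zero,
    zero_pow, mul_zero, one_pow, mul_one, one_mul] at h01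
  linarith

/-- Let `f : E → ℝ` be differentiable with `M`-Lipschitz gradient on a real
Hilbert space, `ζ ≥ 1`, `α > 0` with `2 α √ζ > M α²`, and let `u` be gradient-ascent iterates
with constant step size `α/√ζ`: `u (i+1) = u i + (α/√ζ) • ∇f (u i)`. Then
`min_{i<ζ} ‖∇f (u i)‖² ≤ 2 (f (u ζ) − f (u 0)) / (2 α √ζ − M α²)`. -/
theorem gradient_ascent_min_grad_bound
    {E : Type*} [NormedAddCommGroup E] [InnerProductSpace ℝ E] [CompleteSpace E]
    (f : E → ℝ) (M : ℝ) (hM : 0 ≤ M)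
    (hf : Differentiable ℝ f)
    (hlip : ∀ x y, ‖gradient f x - gradient f y‖ ≤ M * ‖x - y‖)
    (ζ : ℕ) (hζ : 1 ≤ ζ) (α : ℝ) (hα : 0 < α)
    (hstep : M * α ^ 2 < 2 * α * Real.sqrt ζ)
    (u : ℕ → E)
    (hu : ∀ i, u (i + 1) = u i + (α / Real.sqrt ζ) • gradient f (u i)) :
    (Finset.range ζ).inf' (Finset.nonempty_range_iff.mpr (by omega))
        (fun i => ‖gradient f (u i)‖ ^ 2) ≤
      2 * (f (u ζ) - f (u 0)) / (2 * α * Real.sqrt ζ - M * α ^ 2) := by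
  have hζpos : (0 : ℝ) < (ζ : ℝ) := by exact_mod_cast Nat.lt_of_lt_of_le Nat.zero_lt_one hζ
  set s : ℝ := Real.sqrt ζ with hs_def
  have hs : 0 < s := Real.sqrt_pos.mpr hζpos
  have hss : s * s = (ζ : ℝ) := Real.mul_self_sqrt hζpos.le
  set η : ℝ := α / s with hη_def
  have hη : 0 < η := div_pos hα hs
  set c : ℝ := η - M / 2 * η ^ 2 with hc_def
  have hζc : (ζ : ℝ) * c = (2 * α * s - M * α ^ 2) / 2 := by
    rw [hc_def, hη_def, ← hss]
    field_simp
  have hD : 0 < 2 * α * s - M * α ^ 2 := by linarith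
  have hc : 0 < c := by
    have h1 : 0 < (ζ : ℝ) * c := by rw [hζc]; linarith
    by_contra h
    push_neg at h
    nlinarith
  -- per-step bound
  have step : ∀ i, c * ‖gradient f (u i)‖ ^ 2 ≤ f (u (i + 1)) - f (u i) := by
    intro i
    have hd := descent_lemma_aux f M hf hlip (u i) (η • gradient f (u i))
    rw [← hu i] at hd
    have e1 : ⟪gradient f (u i), η • gradient f (u i)⟫_ℝ
        = η * ‖gradient f (u i)‖ ^ 2 := by
      rw [real_inner_smul_right, real_inner_self_eq_norm_sq]
    have e2 : ‖η • gradient f (u i)‖ ^ 2 = η ^ 2 * ‖gradient f (u i)‖ ^ 2 := by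
      rw [norm_smul, mul_pow, Real.norm_eq_abs, sq_abs]
    rw [e1, e2] at hd
    calc c * ‖gradient f (u i)‖ ^ 2
        = η * ‖gradient f (u i)‖ ^ 2
          - M / 2 * (η ^ 2 * ‖gradient f (u i)‖ ^ 2) := by rw [hc_def]; ring
      _ ≤ f (u (i + 1)) - f (u i) := by linarith
  set m : ℝ := (Finset.range ζ).inf' (Finset.nonempty_range_iff.mpr (by omega))
      (fun i => ‖gradient f (u i)‖ ^ 2) with hm_def
  have hsum : (ζ : ℝ) * c * m ≤ f (u ζ) - f (u 0) := by
    calc (ζ : ℝ) * c * m = ∑ _i ∈ Finset.range ζ, c * m := by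
          rw [Finset.sum_const, Finset.card_range, nsmul_eq_mul]; ring
      _ ≤ ∑ i ∈ Finset.range ζ, (f (u (i + 1)) - f (u i)) := by
          apply Finset.sum_le_sum
          intro i hi
          have hmi : m ≤ ‖gradient f (u i)‖ ^ 2 :=
            Finset.inf'_le (fun i => ‖gradient f (u i)‖ ^ 2) hi
          calc c * m ≤ c * ‖gradient f (u i)‖ ^ 2 :=
                mul_le_mul_of_nonneg_left hmi hc.le
            _ ≤ f (u (i + 1)) - f (u i) := step i
      _ = f (u ζ) - f (u 0) := Finset.sum_range_sub (fun n => f (u n)) ζ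
  rw [le_div_iff₀ hD]
  have key : m * (2 * α * s - M * α ^ 2) = 2 * ((ζ : ℝ) * c * m) := by
    rw [hζc]; ring
  linarith
end
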